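/- Equivalently to convexity of Q₁, the set of macroscopically non-contextual models is NOT obviously convex at the level of γ certificates: if γ_p and γ_q are MNC certificates for p and q respectively, then t·γ_p + (1−t)·γ_q + t(1−t)·(p−q)(p−q)^T is an MNC certificate for t·p + (1−t)·q, where (p−q)(p−q)^T denotes the rank-one matrix with entries (p(u)−q(u))(p(v)−q(v)). -/

import Mathlib

/-- Macroscopic non-contextuality certificate for `p`. -/
def MNCCert {V : Type*} [Fintype V] [DecidableEq V] (E : Finset (Finset V))
    (p : V → ℝ) (γ : Matrix V V ℝ) : Prop :=
  γ.PosSemidef ∧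
  (∀ e ∈ E, ∀ v : V, ∑ u ∈ e, γ u v = 0) ∧
  (∀ e ∈ E, ∀ u ∈ e, ∀ v ∈ e, u ≠ v → γ u v = -(p u * p v)) ∧
  (∀ v : V, γ v v = p v - (p v) ^ 2)

lemma psd_smul {V : Type*} [Fintype V] {c : ℝ} (hc : 0 ≤ c) {M : Matrix V V ℝ}
    (hM : M.PosSemidef) : (c • M).PosSemidef := by
  refine Matrix.PosSemidef.of_dotProduct_mulVec_nonneg ?_ fun x => ?_
  · unfold Matrix.IsHermitian
    rw [Matrix.conjTranspose_smul, hM.1]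
    simp
  · rw [Matrix.smul_mulVec, dotProduct_smul]
    exact mul_nonneg hc (hM.dotProduct_mulVec_nonneg x)

lemma psd_rankone {V : Type*} [Fintype V] (d : V → ℝ) :
    (Matrix.of fun u v : V => d u * d v).PosSemidef := by
  refine Matrix.PosSemidef.of_dotProduct_mulVec_nonneg ?_ fun x => ?_
  · ext u v
    simp [Matrix.conjTranspose_apply, mul_comm]
  · have h : dotProduct (star x) ((Matrix.of fun u v : V => d u * d v).mulVec x)
        = (∑ u, d u * x u) ^ 2 := by
      simp only [dotProduct, Matrix.mulVec, Pi.star_apply, star_trivial,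
        Matrix.of_apply, sq, Finset.sum_mul, Finset.mul_sum]
      rw [Finset.sum_comm]
      exact Finset.sum_congr rfl fun u _ => Finset.sum_congr rfl fun v _ => by ring
    rw [h]
    positivity

/-- Combining MNC certificates: if `γ_p` and `γ_q` are MNC certificates for `p` and `q`,
then `t·γ_p + (1−t)·γ_q + t(1−t)·(p−q)(p−q)ᵀ` is an MNC certificate for
`t·p + (1−t)·q`. -/
theorem mnc_convex_combination {V : Type*} [Fintype V] [DecidableEq V]
    (E : Finset (Finset V)) (p q : V → ℝ)
    (hp : ∀ v, 0 ≤ p v ∧ p v ≤ 1) (hq : ∀ v, 0 ≤ q v ∧ q v ≤ 1)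
    (hpnorm : ∀ e ∈ E, ∑ v ∈ e, p v = 1) (hqnorm : ∀ e ∈ E, ∑ v ∈ e, q v = 1)
    (γp γq : Matrix V V ℝ)
    (hγp : MNCCert E p γp) (hγq : MNCCert E q γq)
    (t : ℝ) (ht0 : 0 ≤ t) (ht1 : t ≤ 1) :
    MNCCert E (fun v => t * p v + (1 - t) * q v)
      (t • γp + (1 - t) • γq +
        (t * (1 - t)) • Matrix.of fun u v : V => (p u - q u) * (p v - q v)) := by
  obtain ⟨hp1, hp2, hp3, hp4⟩ := hγp
  obtain ⟨hq1, hq2, hq3, hq4⟩ := hγq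
  have ht0' : (0:ℝ) ≤ 1 - t := by linarith
  refine ⟨?_, ?_, ?_, ?_⟩
  · exact ((psd_smul ht0 hp1).add (psd_smul ht0' hq1)).add
      (psd_smul (mul_nonneg ht0 ht0') (psd_rankone fun u => p u - q u))
  · intro e he v
    simp only [Matrix.add_apply, Matrix.smul_apply, Matrix.of_apply, smul_eq_mul,
      Finset.sum_add_distrib, ← Finset.mul_sum]
    rw [hp2 e he v, hq2 e he v]
    have : ∑ u ∈ e, (p u - q u) * (p v - q v) = 0 := by
      rw [← Finset.sum_mul, Finset.sum_sub_distrib, hpnorm e he, hqnorm e he]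
      ring
    rw [this]
    ring
  · intro e he u hu v hv huv
    simp only [Matrix.add_apply, Matrix.smul_apply, Matrix.of_apply, smul_eq_mul]
    rw [hp3 e he u hu v hv huv, hq3 e he u hu v hv huv]
    ring
  · intro v
    simp only [Matrix.add_apply, Matrix.smul_apply, Matrix.of_apply, smul_eq_mul]
    rw [hp4 v, hq4 v]
    ring
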